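/- arXiv:1601.03271 — 3 statements merged into one kernel-verified Lean document; each statement's English description precedes it below -/
import Mathlib

section
/- The coinductive tree subtyping relation ≤_T is a preorder: it is reflexive and transitive. -/
namespace CAP

/-- μ-types: variables, constants, compounds D @ A, functions A ⊃ B, unions A ⊕ B, recursive μV.A -/
inductive MuTy : Type
  | tvar : ℕ → MuTy
  | tconst : ℕ → MuTy
  | comp : MuTy → MuTy → MuTy
  | arr : MuTy → MuTy → MuTy
  | union : MuTy → MuTy → MuTy
  | mu : ℕ → MuTy → MuTy
  deriving DecidableEq

namespace MuTy

/-- substitution of `B` for variable `V` -/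
def subst (V : ℕ) (B : MuTy) : MuTy → MuTy
  | tvar n => if n = V then B else tvar n
  | tconst c => tconst c
  | comp A₁ A₂ => comp (subst V B A₁) (subst V B A₂)
  | arr A₁ A₂ => arr (subst V B A₁) (subst V B A₂)
  | union A₁ A₂ => union (subst V B A₁) (subst V B A₂)
  | mu W A => if W = V then mu W A else mu W (subst V B A)

/-- `V` occurs in the type only under `comp` or `arr` (if at all) -/
def Guarded (V : ℕ) : MuTy → Prop
  | tvar n => n ≠ V
  | tconst _ => True
  | comp _ _ => True
  | arr _ _ => True
  | union A₁ A₂ => Guarded V A₁ ∧ Guarded V A₂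
  | mu W A => W = V ∨ Guarded V A

/-- contractive μ-types -/
def Contractive : MuTy → Prop
  | tvar _ => True
  | tconst _ => True
  | comp A₁ A₂ => Contractive A₁ ∧ Contractive A₂
  | arr A₁ A₂ => Contractive A₁ ∧ Contractive A₂
  | union A₁ A₂ => Contractive A₁ ∧ Contractive A₂
  | mu V A => Guarded V A ∧ Contractive A

/-- free variables -/
def fv : MuTy → Set ℕ
  | tvar n => {n}
  | tconst _ => ∅
  | comp A₁ A₂ => fv A₁ ∪ fv A₂
  | arr A₁ A₂ => fv A₁ ∪ fv A₂
  | union A₁ A₂ => fv A₁ ∪ fv A₂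
  | mu V A => fv A \ {V}

/-- number of consecutive μ binders at the root -/
def headMu : MuTy → ℕ
  | mu _ A => headMu A + 1
  | _ => 0

end MuTy

/-- inductive μ-type equivalence ≈ -/
inductive MuEq : MuTy → MuTy → Prop
  | refl (A) : MuEq A A
  | trans : MuEq A B → MuEq B C → MuEq A C
  | symm : MuEq A B → MuEq B A
  | arrCong : MuEq A A' → MuEq B B' → MuEq (.arr A B) (.arr A' B')
  | compCong : MuEq D D' → MuEq A A' → MuEq (.comp D A) (.comp D' A')
  | unionIdem (A) : MuEq (.union A A) A
  | unionComm (A B) : MuEq (.union A B) (.union B A)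
  | unionAssoc (A B C) : MuEq (.union A (.union B C)) (.union (.union A B) C)
  | unionCong : MuEq A A' → MuEq B B' → MuEq (.union A B) (.union A' B')
  | muCong : MuEq A B → MuEq (.mu V A) (.mu V B)
  | fold (V A) : MuEq (.mu V A) (MuTy.subst V (.mu V A) A)
  | contr : MuEq A (MuTy.subst V A B) → (MuTy.mu V B).Contractive → MuEq A (.mu V B)

/-- inductive μ-type subtyping, with a context of variable assumptions -/
inductive MuLe : Set (ℕ × ℕ) → MuTy → MuTy → Prop
  | refl (S A) : MuLe S A A
  | hyp : (V, W) ∈ S → MuLe S (.tvar V) (.tvar W)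
  | eq : MuEq A B → MuLe S A B
  | trans : MuLe S A B → MuLe S B C → MuLe S A C
  | compCong : MuLe S D D' → MuLe S A A' → MuLe S (.comp D A) (.comp D' A')
  | func : MuLe S A' A → MuLe S B B' → MuLe S (.arr A B) (.arr A' B')
  | unionL : MuLe S A C → MuLe S B C → MuLe S (.union A B) C
  | unionR1 : MuLe S A B → MuLe S A (.union B C)
  | unionR2 : MuLe S A C → MuLe S A (.union B C)
  | recRule : MuLe (insert (V, W) S) A B → W ∉ A.fv → V ∉ B.fv →
      MuLe S (.mu V A) (.mu W B)

/-- binary association trees of unions, used to express n-fold unions with arbitrary association -/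
inductive UTree : Type
  | leaf : MuTy → UTree
  | node : UTree → UTree → UTree

def UTree.toTy : UTree → MuTy
  | .leaf A => A
  | .node l r => .union l.toTy r.toTy

def UTree.leaves : UTree → List MuTy
  | .leaf A => [A]
  | .node l r => l.leaves ++ r.leaves

/-! ## Infinite types as trees -/

inductive Atom : Type
  | var : ℕ → Atom
  | const : ℕ → Atom
  | bullet : Atom
  deriving DecidableEq

inductive Lab : Type
  | atom : Atom → Lab
  | comp : Lab
  | arr : Lab
  | union : Lab
  deriving DecidableEq

def Lab.IsBinary : Lab → Prop
  | .comp => True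
  | .arr => True
  | .union => True
  | .atom _ => False

/-- possibly infinite trees: partial labelling of positions -/
abbrev ITree : Type := List Bool → Option Lab

namespace ITree

def child (A : ITree) (b : Bool) : ITree := fun π => A (b :: π)

/-- well-formed infinite types: rooted, prefix-closed with binary branching,
and no infinite branch consisting solely of ⊕ -/
def Wf (A : ITree) : Prop :=
  (A []).isSome ∧
  (∀ π b, (A (π ++ [b])).isSome ↔ ∃ l, A π = some l ∧ l.IsBinary) ∧
  (∀ (π : List Bool) (f : ℕ → Bool), ∃ n, A (π ++ (List.range n).map f) ≠ some Lab.union)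

end ITree

/-- maximal union decomposition: the list of non-union components of a tree -/
inductive UnionComps : ITree → List ITree → Prop
  | nonUnion (A : ITree) : A [] ≠ some Lab.union → UnionComps A [A]
  | union (A : ITree) (l r : List ITree) :
      A [] = some Lab.union →
      UnionComps (A.child false) l → UnionComps (A.child true) r →
      UnionComps A (l ++ r)

/-- the rule functional for coinductive tree equivalence -/
def EqF (R : ITree → ITree → Prop) (A B : ITree) : Prop :=
  (∃ a : Atom, A [] = some (Lab.atom a) ∧ B [] = some (Lab.atom a)) ∨
  (A [] = some Lab.comp ∧ B [] = some Lab.comp ∧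
    R (A.child false) (B.child false) ∧ R (A.child true) (B.child true)) ∨
  (A [] = some Lab.arr ∧ B [] = some Lab.arr ∧
    R (A.child false) (B.child false) ∧ R (A.child true) (B.child true)) ∨
  (∃ (la lb : List ITree), UnionComps A la ∧ UnionComps B lb ∧
    2 < la.length + lb.length ∧
    (∃ f : Fin la.length → Fin lb.length, ∀ i, R (la.get i) (lb.get (f i))) ∧
    (∃ g : Fin lb.length → Fin la.length, ∀ j, R (la.get (g j)) (lb.get j)))

/-- coinductive tree equivalence ≈_T : the greatest fixed point of `EqF` -/
def TreeEq (A B : ITree) : Prop :=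
  ∃ R : ITree → ITree → Prop, (∀ X Y, R X Y → EqF R X Y) ∧ R A B

/-- the rule functional for coinductive tree subtyping -/
def LeF (R : ITree → ITree → Prop) (A B : ITree) : Prop :=
  (∃ a : Atom, A [] = some (Lab.atom a) ∧ B [] = some (Lab.atom a)) ∨
  (A [] = some Lab.comp ∧ B [] = some Lab.comp ∧
    R (A.child false) (B.child false) ∧ R (A.child true) (B.child true)) ∨
  (A [] = some Lab.arr ∧ B [] = some Lab.arr ∧
    R (B.child false) (A.child false) ∧ R (A.child true) (B.child true)) ∨
  (∃ (la lb : List ITree), UnionComps A la ∧ UnionComps B lb ∧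
    2 < la.length + lb.length ∧
    (∃ f : Fin la.length → Fin lb.length, ∀ i, R (la.get i) (lb.get (f i))))

/-- coinductive tree subtyping ≤_T : the greatest fixed point of `LeF` -/
def TreeLe (A B : ITree) : Prop :=
  ∃ R : ITree → ITree → Prop, (∀ X Y, R X Y → LeF R X Y) ∧ R A B

open Classical in
/-- tree substitution of tree `B` for the variable `V` -/
noncomputable def substT (V : ℕ) (B A : ITree) : ITree := fun π =>
  if h : ∃ ps : List Bool × List Bool,
      π = ps.1 ++ ps.2 ∧ A ps.1 = some (Lab.atom (Atom.var V))
  then B (Classical.choose h).2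
  else A π

/-- the single-node tree consisting of an atom -/
def atomTree (a : Atom) : ITree := fun π => if π = [] then some (Lab.atom a) else none

/-- a tree with binary root label `l` and subtrees `A₁`, `A₂` -/
def binTree (l : Lab) (A₁ A₂ : ITree) : ITree := fun π =>
  match π with
  | [] => some l
  | false :: π' => A₁ π'
  | true :: π' => A₂ π'

/-- effective depth of a position: union nodes do not consume depth -/
def edepth (A : ITree) : List Bool → ℕ
  | [] => 0
  | b :: π => (if A [] = some Lab.union then 0 else 1) + edepth (A.child b) π

open Classical in
/-- truncation of a tree at depth `k`; cut points are replaced by the constant • -/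
noncomputable def cut (k : ℕ) (A : ITree) : ITree := fun π =>
  if ∀ p, p <+: π → p ≠ π → edepth A p < k then
    (if edepth A π < k then A π
     else if (A π).isSome then some (Lab.atom Atom.bullet) else none)
  else none

/-- labels of the tree interpretation of a μ-type (μ is unfolded completely) -/
inductive HasLab : MuTy → List Bool → Lab → Prop
  | tvar (n) : HasLab (.tvar n) [] (.atom (.var n))
  | tconst (c) : HasLab (.tconst c) [] (.atom (.const c))
  | compRoot (A B) : HasLab (.comp A B) [] .comp
  | compL : HasLab A π l → HasLab (.comp A B) (false :: π) l
  | compR : HasLab B π l → HasLab (.comp A B) (true :: π) l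
  | arrRoot (A B) : HasLab (.arr A B) [] .arr
  | arrL : HasLab A π l → HasLab (.arr A B) (false :: π) l
  | arrR : HasLab B π l → HasLab (.arr A B) (true :: π) l
  | unionRoot (A B) : HasLab (.union A B) [] .union
  | unionL : HasLab A π l → HasLab (.union A B) (false :: π) l
  | unionR : HasLab B π l → HasLab (.union A B) (true :: π) l
  | mu : HasLab (MuTy.subst V (.mu V A) A) π l → HasLab (.mu V A) π l

open Classical in
/-- the tree interpretation ⟦·⟧ of μ-types -/
noncomputable def interp (A : MuTy) : ITree := fun π =>
  if h : ∃ l, HasLab A π l then some (Classical.choose h) else none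

/-- application of a parallel substitution to a μ-type -/
def applyS (σ : ℕ → MuTy) : MuTy → MuTy
  | .tvar n => σ n
  | .tconst c => .tconst c
  | .comp A B => .comp (applyS σ A) (applyS σ B)
  | .arr A B => .arr (applyS σ A) (applyS σ B)
  | .union A B => .union (applyS σ A) (applyS σ B)
  | .mu V A => .mu V (applyS (Function.update σ V (.tvar V)) A)

/-- outermost type constructor (head μ binders are unfolded/skipped) -/
inductive HeadC : Type
  | hvar : ℕ → HeadC
  | hconst : ℕ → HeadC
  | hcomp : HeadC
  | harr : HeadC
  | hunion : HeadC
  deriving DecidableEq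

def headOf : MuTy → HeadC
  | .tvar n => .hvar n
  | .tconst c => .hconst c
  | .comp _ _ => .hcomp
  | .arr _ _ => .harr
  | .union _ _ => .hunion
  | .mu _ A => headOf A

/-- non-union μ-types: after unfolding head μ binders the top constructor is not ⊕ -/
def NonUnion : MuTy → Prop
  | .union _ _ => False
  | .mu _ A => NonUnion A
  | _ => True

/-- union contexts U ::= □ | U ⊕ A | A ⊕ U -/
inductive UCtx : Type
  | hole : UCtx
  | left : UCtx → MuTy → UCtx
  | right : MuTy → UCtx → UCtx

def UCtx.fill : UCtx → MuTy → MuTy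
  | .hole, A => A
  | .left U B, A => .union (U.fill A) B
  | .right B U, A => .union B (U.fill A)

end CAP

namespace CAP

/-! ### Auxiliary lemmas -/

lemma LeF.mono {R S : ITree → ITree → Prop} (h : ∀ X Y, R X Y → S X Y) :
    ∀ {A B}, LeF R A B → LeF S A B := by
  intro A B hl
  rcases hl with ⟨a, h1, h2⟩ | ⟨h1, h2, h3, h4⟩ | ⟨h1, h2, h3, h4⟩ |
    ⟨la, lb, h1, h2, h3, ⟨f, hf⟩⟩
  · exact Or.inl ⟨a, h1, h2⟩
  · exact Or.inr (Or.inl ⟨h1, h2, h _ _ h3, h _ _ h4⟩)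
  · exact Or.inr (Or.inr (Or.inl ⟨h1, h2, h _ _ h3, h _ _ h4⟩))
  · exact Or.inr (Or.inr (Or.inr ⟨la, lb, h1, h2, h3, f, fun i => h _ _ (hf i)⟩))

lemma TreeLe.unfold {A B} (h : TreeLe A B) : LeF TreeLe A B := by
  obtain ⟨R, hR, hab⟩ := h
  exact LeF.mono (fun X Y hxy => ⟨R, hR, hxy⟩) (hR _ _ hab)

lemma UnionComps.pos : ∀ {A l}, UnionComps A l → 0 < l.length := by
  intro A l h
  induction h with
  | nonUnion A h => simp
  | union A l r hroot hl hr ihl ihr => simp; omega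

lemma UnionComps.det : ∀ {A l}, UnionComps A l → ∀ {l'}, UnionComps A l' → l = l' := by
  intro A l h
  induction h with
  | nonUnion A h =>
    intro l' h'
    cases h' with
    | nonUnion => rfl
    | union _ _ _ hroot => exact absurd hroot h
  | union A l r hroot hl hr ihl ihr =>
    intro l' h'
    cases h' with
    | nonUnion _ h => exact absurd hroot h
    | union _ l₂ r₂ _ hl₂ hr₂ => rw [ihl hl₂, ihr hr₂]

lemma UnionComps.comps : ∀ {A l}, UnionComps A l → ∀ T ∈ l, T [] ≠ some Lab.union := by
  intro A l h
  induction h with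
  | nonUnion A h => intro T hT; rw [List.mem_singleton] at hT; subst hT; exact h
  | union A l r hroot hl hr ihl ihr =>
    intro T hT
    rcases List.mem_append.1 hT with h' | h'
    · exact ihl T h'
    · exact ihr T h'

lemma UnionComps.nonunion_eq {A l} (h : UnionComps A l) (hr : A [] ≠ some Lab.union) :
    l = [A] := by
  cases h with
  | nonUnion => rfl
  | union _ _ _ hroot => exact absurd hroot hr

lemma UnionComps.singleton {A l} (h : UnionComps A l) (hl : l.length = 1) :
    l = [A] ∧ A [] ≠ some Lab.union := by
  cases h with
  | nonUnion _ h => exact ⟨rfl, h⟩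
  | union _ l₁ r₁ hroot hl₁ hr₁ =>
    exfalso
    have := hl₁.pos; have := hr₁.pos
    simp at hl; omega

lemma UnionComps.two_le {A l} (h : UnionComps A l) (hr : A [] = some Lab.union) :
    2 ≤ l.length := by
  cases h with
  | nonUnion _ h => exact absurd hr h
  | union _ l₁ r₁ hroot hl₁ hr₁ =>
    have := hl₁.pos; have := hr₁.pos
    simp; omega

lemma ITree.Wf.child_wf {A : ITree} (hA : A.Wf) {l : Lab} (hroot : A [] = some l)
    (hb : l.IsBinary) (b : Bool) : (A.child b).Wf := by
  obtain ⟨h1, h2, h3⟩ := hA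
  refine ⟨?_, ?_, ?_⟩
  · have := (h2 [] b).2 ⟨l, hroot, hb⟩
    simpa [ITree.child] using this
  · intro π b'
    have := h2 (b :: π) b'
    simpa [ITree.child] using this
  · intro π f
    obtain ⟨n, hn⟩ := h3 (b :: π) f
    exact ⟨n, by simpa [ITree.child] using hn⟩

lemma exists_unionComps {A : ITree} (hA : A.Wf) : ∃ l, UnionComps A l := by
  by_contra h
  have key : ∀ T : ITree, (¬ ∃ l, UnionComps T l) →
      T [] = some Lab.union ∧ ∃ b, ¬ ∃ l, UnionComps (T.child b) l := by
    intro T hT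
    have hroot : T [] = some Lab.union := by
      by_contra hr; exact hT ⟨[T], UnionComps.nonUnion T hr⟩
    refine ⟨hroot, ?_⟩
    by_contra hb
    push_neg at hb
    obtain ⟨lf, hlf⟩ := hb false
    obtain ⟨lt, hlt⟩ := hb true
    exact hT ⟨lf ++ lt, UnionComps.union T lf lt hroot hlf hlt⟩
  let Bad := {T : ITree // ¬ ∃ l, UnionComps T l}
  let step : Bad → Bool × Bad := fun p =>
    ⟨(key p.1 p.2).2.choose, ⟨p.1.child (key p.1 p.2).2.choose, (key p.1 p.2).2.choose_spec⟩⟩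
  let seq : ℕ → Bad := fun n => Nat.rec ⟨A, h⟩ (fun _ p => (step p).2) n
  let f : ℕ → Bool := fun n => (step (seq n)).1
  have hseq : ∀ n π, (seq n).1 π = A ((List.range n).map f ++ π) := by
    intro n
    induction n with
    | zero => intro π; rfl
    | succ n ih =>
      intro π
      have : (seq (n + 1)).1 π = (seq n).1 (f n :: π) := rfl
      rw [this, ih]
      simp [List.range_succ]
  obtain ⟨n, hn⟩ := hA.2.2 [] f
  apply hn
  have := (key (seq n).1 (seq n).2).1
  rw [hseq n []] at this
  simpa using this

lemma UnionComps.comps_wf : ∀ {A l}, UnionComps A l → A.Wf → ∀ T ∈ l, T.Wf := by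
  intro A l h
  induction h with
  | nonUnion A h => intro hA T hT; rw [List.mem_singleton] at hT; subst hT; exact hA
  | union A l r hroot hl hr ihl ihr =>
    intro hA T hT
    rcases List.mem_append.1 hT with h' | h'
    · exact ihl (hA.child_wf hroot trivial false) T h'
    · exact ihr (hA.child_wf hroot trivial true) T h'

/-- The composition relation for transitivity. -/
def Comp2 (X Z : ITree) : Prop := ∃ Y, TreeLe X Y ∧ TreeLe Y Z

lemma key_nonunion : ∀ {X Y Z : ITree}, TreeLe X Y → TreeLe Y Z →
    Y [] ≠ some Lab.union → LeF Comp2 X Z := by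
  intro X Y Z hxy hyz hY
  -- extract a decomposition of X whose components are all ≤ Y
  have h1 : ∃ la, UnionComps X la ∧ ∀ i : Fin la.length, TreeLe (la.get i) Y := by
    rcases hxy.unfold with ⟨a, hXa, hYa⟩ | ⟨hXc, hYc, _, _⟩ | ⟨hXr, hYr, _, _⟩ |
        ⟨la, lb, hla, hlb, hlen, f₁, hf₁⟩
    · exact ⟨[X], UnionComps.nonUnion X (by rw [hXa]; simp), fun i => by
        simpa [List.getElem_singleton] using hxy⟩
    · exact ⟨[X], UnionComps.nonUnion X (by rw [hXc]; simp), fun i => by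
        simpa [List.getElem_singleton] using hxy⟩
    · exact ⟨[X], UnionComps.nonUnion X (by rw [hXr]; simp), fun i => by
        simpa [List.getElem_singleton] using hxy⟩
    · have hlbY : lb = [Y] := hlb.nonunion_eq hY
      subst hlbY
      exact ⟨la, hla, fun i => by simpa [List.getElem_singleton] using hf₁ i⟩
  -- extract a decomposition of Z with a component Y is ≤ of
  have h2 : ∃ lc, UnionComps Z lc ∧ ∃ j : Fin lc.length, TreeLe Y (lc.get j) := by
    rcases hyz.unfold with ⟨a, hYa, hZa⟩ | ⟨hYc, hZc, _, _⟩ | ⟨hYr, hZr, _, _⟩ |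
        ⟨lb', lc, hlb', hlc, hlen, f₂, hf₂⟩
    · exact ⟨[Z], UnionComps.nonUnion Z (by rw [hZa]; simp), ⟨0, by simp⟩, by
        simpa [List.getElem_singleton] using hyz⟩
    · exact ⟨[Z], UnionComps.nonUnion Z (by rw [hZc]; simp), ⟨0, by simp⟩, by
        simpa [List.getElem_singleton] using hyz⟩
    · exact ⟨[Z], UnionComps.nonUnion Z (by rw [hZr]; simp), ⟨0, by simp⟩, by
        simpa [List.getElem_singleton] using hyz⟩
    · have hlbY : lb' = [Y] := hlb'.nonunion_eq hY
      subst hlbY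
      refine ⟨lc, hlc, f₂ ⟨0, by simp⟩, by simpa [List.getElem_singleton] using hf₂ ⟨0, by simp⟩⟩
  obtain ⟨la, hla, hlaY⟩ := h1
  obtain ⟨lc, hlc, j, hYlc⟩ := h2
  by_cases hlen : 2 < la.length + lc.length
  · exact Or.inr (Or.inr (Or.inr ⟨la, lc, hla, hlc, hlen,
      fun _ => j, fun i => ⟨Y, hlaY i, hYlc⟩⟩))
  · -- both decompositions are singletons: X and Z are non-union, match head constructors
    have hpa := hla.pos
    have hpc := hlc.pos
    have hla1 : la.length = 1 := by omega
    have hlc1 : lc.length = 1 := by omega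
    obtain ⟨hlaX, hXnu⟩ := hla.singleton hla1
    obtain ⟨hlcZ, hZnu⟩ := hlc.singleton hlc1
    -- h1 part of hxy.unfold must be a non-union rule
    rcases hxy.unfold with ⟨a, hXa, hYa⟩ | ⟨hXc, hYc, hx1, hx2⟩ | ⟨hXr, hYr, hx1, hx2⟩ |
        ⟨la', lb', hla', hlb', hlen', _, _⟩
    · -- X, Y atoms
      rcases hyz.unfold with ⟨a', hYa', hZa'⟩ | ⟨hYc', _, _, _⟩ | ⟨hYr', _, _, _⟩ |
          ⟨lb'', lc'', hlb'', hlc'', hlen'', _, _⟩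
      · rw [hYa] at hYa'
        obtain rfl : a = a' := by injection hYa' with h'; injection h'
        exact Or.inl ⟨a, hXa, hZa'⟩
      · rw [hYa] at hYc'; simp at hYc'
      · rw [hYa] at hYr'; simp at hYr'
      · have e1 : lb'' = [Y] := hlb''.nonunion_eq hY
        have e2 : lc'' = [Z] := hlc''.nonunion_eq hZnu
        rw [e1, e2] at hlen''; simp at hlen''
    · -- X, Y comps
      rcases hyz.unfold with ⟨a', hYa', hZa'⟩ | ⟨hYc', hZc', hy1, hy2⟩ | ⟨hYr', _, _, _⟩ |
          ⟨lb'', lc'', hlb'', hlc'', hlen'', _, _⟩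
      · rw [hYc] at hYa'; simp at hYa'
      · exact Or.inr (Or.inl ⟨hXc, hZc', ⟨_, hx1, hy1⟩, ⟨_, hx2, hy2⟩⟩)
      · rw [hYc] at hYr'; simp at hYr'
      · have e1 : lb'' = [Y] := hlb''.nonunion_eq hY
        have e2 : lc'' = [Z] := hlc''.nonunion_eq hZnu
        rw [e1, e2] at hlen''; simp at hlen''
    · -- X, Y arrows
      rcases hyz.unfold with ⟨a', hYa', hZa'⟩ | ⟨hYc', _, _, _⟩ | ⟨hYr', hZr', hy1, hy2⟩ |
          ⟨lb'', lc'', hlb'', hlc'', hlen'', _, _⟩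
      · rw [hYr] at hYa'; simp at hYa'
      · rw [hYr] at hYc'; simp at hYc'
      · exact Or.inr (Or.inr (Or.inl ⟨hXr, hZr', ⟨_, hy1, hx1⟩, ⟨_, hx2, hy2⟩⟩))
      · have e1 : lb'' = [Y] := hlb''.nonunion_eq hY
        have e2 : lc'' = [Z] := hlc''.nonunion_eq hZnu
        rw [e1, e2] at hlen''; simp at hlen''
    · -- union rule impossible: both decompositions singletons
      have e1 : la' = [X] := hla'.nonunion_eq hXnu
      have e2 : lb' = [Y] := hlb'.nonunion_eq hY
      rw [e1, e2] at hlen'; simp at hlen'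

lemma comp2_step : ∀ X Z, Comp2 X Z → LeF Comp2 X Z := by
  rintro X Z ⟨Y, hxy, hyz⟩
  by_cases hY : Y [] = some Lab.union
  · -- both steps must use the union rule
    rcases hxy.unfold with ⟨a, hXa, hYa⟩ | ⟨hXc, hYc, _, _⟩ | ⟨hXr, hYr, _, _⟩ |
        ⟨la, lb, hla, hlb, hlen₁, f₁, hf₁⟩
    · rw [hY] at hYa; simp at hYa
    · rw [hY] at hYc; simp at hYc
    · rw [hY] at hYr; simp at hYr
    · rcases hyz.unfold with ⟨a, hYa', hZa'⟩ | ⟨hYc', _, _, _⟩ | ⟨hYr', _, _, _⟩ |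
          ⟨lb', lc, hlb', hlc, hlen₂, f₂, hf₂⟩
      · rw [hY] at hYa'; simp at hYa'
      · rw [hY] at hYc'; simp at hYc'
      · rw [hY] at hYr'; simp at hYr'
      · obtain rfl : lb = lb' := hlb.det hlb'
        by_cases hlen : 2 < la.length + lc.length
        · exact Or.inr (Or.inr (Or.inr ⟨la, lc, hla, hlc, hlen,
            fun i => f₂ (f₁ i), fun i => ⟨lb.get (f₁ i), hf₁ i, hf₂ (f₁ i)⟩⟩))
        · have hpa := hla.pos
          have hpc := hlc.pos
          obtain ⟨hlaX, _⟩ := hla.singleton (by omega)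
          obtain ⟨hlcZ, _⟩ := hlc.singleton (by omega)
          have i0 : Fin la.length := ⟨0, hpa⟩
          have hXYj : TreeLe X (lb.get (f₁ i0)) := by
            have := hf₁ i0
            rwa [show la.get i0 = X by rw [List.get_of_eq hlaX]; simp] at this
          have hYjZ : TreeLe (lb.get (f₁ i0)) Z := by
            have := hf₂ (f₁ i0)
            rwa [show lc.get (f₂ (f₁ i0)) = Z by rw [List.get_of_eq hlcZ]; simp] at this
          exact key_nonunion hXYj hYjZ (hlb.comps _ (List.get_mem lb (f₁ i0)))
  · exact key_nonunion hxy hyz hY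

/-- coinductive tree subtyping ≤_T is a preorder (reflexive and transitive)
on well-formed infinite types. -/
theorem stmt7 :
    (∀ A : ITree, A.Wf → TreeLe A A) ∧
    (∀ A B C : ITree, A.Wf → B.Wf → C.Wf → TreeLe A B → TreeLe B C → TreeLe A C) := by
  constructor
  · intro A hA
    refine ⟨fun X Y => X = Y ∧ X.Wf, ?_, rfl, hA⟩
    rintro X Y ⟨rfl, hX⟩
    obtain ⟨l, hl⟩ := Option.isSome_iff_exists.1 hX.1
    cases l with
    | atom a => exact Or.inl ⟨a, hl, hl⟩
    | comp =>
      exact Or.inr (Or.inl ⟨hl, hl, ⟨rfl, hX.child_wf hl trivial false⟩,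
        ⟨rfl, hX.child_wf hl trivial true⟩⟩)
    | arr =>
      exact Or.inr (Or.inr (Or.inl ⟨hl, hl, ⟨rfl, hX.child_wf hl trivial false⟩,
        ⟨rfl, hX.child_wf hl trivial true⟩⟩))
    | union =>
      obtain ⟨la, hla⟩ := exists_unionComps hX
      have h2 : 2 ≤ la.length := hla.two_le hl
      exact Or.inr (Or.inr (Or.inr ⟨la, la, hla, hla, by omega, id,
        fun i => ⟨rfl, hla.comps_wf hX _ (List.get_mem la i)⟩⟩))
  · intro A B C _ _ _ hab hbc
    exact ⟨Comp2, comp2_step, B, hab, hbc⟩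

end CAP
end

section
/- Tree substitution preserves coinductive equivalence: if A ≈_T A' and B ≈_T B' then A[B/V] ≈_T A'[B'/V]. -/
namespace CAP


namespace ITree

lemma wf_none {A : ITree} (w : A.Wf) : ∀ (q π : List Bool), A π = none → A (π ++ q) = none := by
  intro q
  induction q with
  | nil => intro π h; simpa using h
  | cons b q ih =>
    intro π h
    have h1 : A (π ++ [b]) = none := by
      cases hx : A (π ++ [b]) with
      | none => rfl
      | some l =>
        obtain ⟨l', hl', _⟩ := (w.2.1 π b).mp (by rw [hx]; exact rfl)
        rw [h] at hl'; exact absurd hl' (by simp)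
    have := ih (π ++ [b]) h1
    simpa [List.append_assoc] using this

lemma wf_atom_none {A : ITree} (w : A.Wf) {π : List Bool} {a : Atom}
    (h : A π = some (Lab.atom a)) (b : Bool) (q : List Bool) :
    A (π ++ b :: q) = none := by
  have h1 : A (π ++ [b]) = none := by
    cases hx : A (π ++ [b]) with
    | none => rfl
    | some l =>
      obtain ⟨l', hl', hbin⟩ := (w.2.1 π b).mp (by rw [hx]; exact rfl)
      rw [h] at hl'
      cases hl'
      exact hbin.elim
  have := wf_none w q (π ++ [b]) h1
  simpa [List.append_assoc] using this

lemma wf_uniq {A : ITree} (w : A.Wf) {p1 s1 p2 s2 : List Bool} {a1 a2 : Atom}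
    (e : p1 ++ s1 = p2 ++ s2) (h1 : A p1 = some (Lab.atom a1))
    (h2 : A p2 = some (Lab.atom a2)) : p1 = p2 ∧ s1 = s2 := by
  have hp1 : p1 <+: p2 ++ s2 := e ▸ List.prefix_append p1 s1
  have hp2 : p2 <+: p2 ++ s2 := List.prefix_append p2 s2
  have hpp : p1 <+: p2 ∨ p2 <+: p1 := List.prefix_or_prefix_of_prefix hp1 hp2
  have hpeq : p1 = p2 := by
    rcases hpp with ⟨t, ht⟩ | ⟨t, ht⟩
    · cases t with
      | nil => simpa using ht
      | cons b q =>
        exfalso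
        rw [← ht] at h2
        rw [wf_atom_none w h1 b q] at h2
        cases h2
    · cases t with
      | nil => simpa using ht.symm
      | cons b q =>
        exfalso
        rw [← ht] at h1
        rw [wf_atom_none w h2 b q] at h1
        cases h1
  refine ⟨hpeq, ?_⟩
  subst hpeq
  exact List.append_cancel_left e

lemma wf_child {A : ITree} (w : A.Wf) {l : Lab} (h : A [] = some l)
    (hb : l.IsBinary) (b : Bool) : (A.child b).Wf := by
  refine ⟨?_, ?_, ?_⟩
  · have := (w.2.1 [] b).mpr ⟨l, h, hb⟩
    simpa [ITree.child] using this
  · intro π b'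
    have := w.2.1 (b :: π) b'
    simpa [ITree.child] using this
  · intro π f
    obtain ⟨n, hn⟩ := w.2.2 (b :: π) f
    exact ⟨n, by simpa [ITree.child] using hn⟩

end ITree

lemma substT_eq {V : ℕ} {B A : ITree} (w : A.Wf)
    (h : A [] = some (Lab.atom (Atom.var V))) : substT V B A = B := by
  funext π
  have hex : ∃ ps : List Bool × List Bool,
      π = ps.1 ++ ps.2 ∧ A ps.1 = some (Lab.atom (Atom.var V)) := ⟨([], π), by simp, h⟩
  rw [substT, dif_pos hex]
  obtain ⟨e1, e2⟩ := Classical.choose_spec hex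
  have : ([] : List Bool) ++ π = (Classical.choose hex).1 ++ (Classical.choose hex).2 := by
    simpa using e1
  obtain ⟨-, hs⟩ := ITree.wf_uniq w this h e2
  rw [← hs]

lemma substT_root {V : ℕ} {B A : ITree}
    (h : A [] ≠ some (Lab.atom (Atom.var V))) : substT V B A [] = A [] := by
  rw [substT, dif_neg]
  rintro ⟨⟨p, s⟩, h1, h2⟩
  have hp : p = [] := (List.append_eq_nil_iff.mp h1.symm).1
  exact h (hp ▸ h2)

lemma substT_child {V : ℕ} {B A : ITree} (w : A.Wf)
    (h : A [] ≠ some (Lab.atom (Atom.var V))) (b : Bool) :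
    (substT V B A).child b = substT V B (A.child b) := by
  funext π
  show substT V B A (b :: π) = substT V B (A.child b) π
  by_cases hc : ∃ ps : List Bool × List Bool,
      π = ps.1 ++ ps.2 ∧ (A.child b) ps.1 = some (Lab.atom (Atom.var V))
  · have hc1 : ∃ ps : List Bool × List Bool,
        b :: π = ps.1 ++ ps.2 ∧ A ps.1 = some (Lab.atom (Atom.var V)) := by
      obtain ⟨⟨p, s⟩, e1, e2⟩ := hc
      exact ⟨(b :: p, s), by simp [e1], e2⟩
    rw [substT, dif_pos hc1, substT, dif_pos hc]
    obtain ⟨e1, f1⟩ := Classical.choose_spec hc1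
    obtain ⟨e2, f2⟩ := Classical.choose_spec hc
    have f2' : A (b :: (Classical.choose hc).1) = some (Lab.atom (Atom.var V)) := f2
    have e : (Classical.choose hc1).1 ++ (Classical.choose hc1).2 =
        (b :: (Classical.choose hc).1) ++ (Classical.choose hc).2 := by
      rw [List.cons_append, ← e2, ← e1]
    obtain ⟨-, hs⟩ := ITree.wf_uniq w e f1 f2'
    rw [hs]
  · have hc1 : ¬ ∃ ps : List Bool × List Bool,
        b :: π = ps.1 ++ ps.2 ∧ A ps.1 = some (Lab.atom (Atom.var V)) := by
      rintro ⟨⟨p, s⟩, e1, e2⟩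
      cases p with
      | nil => exact h (by simpa using e2)
      | cons b' t =>
        have hb' : b' = b ∧ π = t ++ s := by
          rw [List.cons_append] at e1
          exact ⟨(List.cons.injEq _ _ _ _ ▸ e1).1.symm, (List.cons.injEq _ _ _ _ ▸ e1).2⟩
        refine hc ⟨(t, s), hb'.2, ?_⟩
        show A (b :: t) = _
        rw [← hb'.1]; exact e2
    rw [substT, dif_neg hc1, substT, dif_neg hc]
    rfl

lemma uc_singleton {A : ITree} {l : List ITree} (h : UnionComps A l)
    (hA : A [] ≠ some Lab.union) : l = [A] := by
  cases h with
  | nonUnion => rfl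
  | union _ _ _ h1 => exact absurd h1 hA

lemma uc_roots {A : ITree} {l : List ITree} (h : UnionComps A l) :
    ∀ C ∈ l, C [] ≠ some Lab.union := by
  induction h with
  | nonUnion A hA => intro C hC; rw [List.mem_singleton] at hC; subst hC; exact hA
  | union A l r h1 h2 h3 ihl ihr =>
    intro C hC
    rcases List.mem_append.mp hC with hl | hr
    exacts [ihl _ hl, ihr _ hr]

lemma uc_len {A : ITree} {l : List ITree} (h : UnionComps A l) : 1 ≤ l.length := by
  induction h with
  | nonUnion => simp
  | union A l r _ _ _ ihl ihr => rw [List.length_append]; omega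

lemma uc_wf {A : ITree} {l : List ITree} (h : UnionComps A l) (w : A.Wf) :
    ∀ C ∈ l, C.Wf := by
  induction h with
  | nonUnion A hA => intro C hC; rw [List.mem_singleton] at hC; subst hC; exact w
  | union A l r h1 h2 h3 ihl ihr =>
    intro C hC
    have wl := ITree.wf_child w h1 trivial false
    have wr := ITree.wf_child w h1 trivial true
    rcases List.mem_append.mp hC with hm | hm
    exacts [ihl wl _ hm, ihr wr _ hm]

lemma EqF_mono {R S : ITree → ITree → Prop} (h : ∀ X Y, R X Y → S X Y) :
    ∀ X Y, EqF R X Y → EqF S X Y := by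
  intro X Y hE
  rcases hE with h1 | ⟨a, b, c, d⟩ | ⟨a, b, c, d⟩ |
    ⟨la, lb, h1, h2, h3, ⟨f, hf⟩, ⟨g, hg⟩⟩
  · exact Or.inl h1
  · exact Or.inr (Or.inl ⟨a, b, h _ _ c, h _ _ d⟩)
  · exact Or.inr (Or.inr (Or.inl ⟨a, b, h _ _ c, h _ _ d⟩))
  · exact Or.inr (Or.inr (Or.inr ⟨la, lb, h1, h2, h3,
      ⟨f, fun i => h _ _ (hf i)⟩, ⟨g, fun j => h _ _ (hg j)⟩⟩))

lemma treeEq_dest {A B : ITree} (h : TreeEq A B) : EqF TreeEq A B := by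
  obtain ⟨R, hR, hAB⟩ := h
  exact EqF_mono (fun X Y hXY => ⟨R, hR, hXY⟩) _ _ (hR _ _ hAB)

lemma root_match {C C' : ITree} (h : TreeEq C C') (hC : C [] ≠ some Lab.union)
    (hC' : C' [] ≠ some Lab.union) : C' [] = C [] := by
  rcases treeEq_dest h with ⟨a, e1, e2⟩ | ⟨e1, e2, -⟩ | ⟨e1, e2, -⟩ |
    ⟨la, lb, hla, hlb, hlen, -⟩
  · rw [e1, e2]
  · rw [e1, e2]
  · rw [e1, e2]
  · rw [uc_singleton hla hC, uc_singleton hlb hC'] at hlen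
    simp at hlen

lemma treeEq_comps {B B' : ITree} (h : TreeEq B B') :
    ∃ lb lb', UnionComps B lb ∧ UnionComps B' lb' ∧
      (∀ X ∈ lb, ∃ Y ∈ lb', TreeEq X Y) ∧ (∀ Y ∈ lb', ∃ X ∈ lb, TreeEq X Y) := by
  rcases treeEq_dest h with ⟨a, e1, e2⟩ | ⟨e1, e2, -⟩ | ⟨e1, e2, -⟩ |
    ⟨la, lb, hla, hlb, hlen, ⟨f, hf⟩, ⟨g, hg⟩⟩
  · refine ⟨[B], [B'], UnionComps.nonUnion _ (by rw [e1]; simp),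
      UnionComps.nonUnion _ (by rw [e2]; simp), ?_, ?_⟩ <;>
    · intro X hX; rw [List.mem_singleton] at hX; subst hX
      exact ⟨_, List.mem_singleton.mpr rfl, h⟩
  · refine ⟨[B], [B'], UnionComps.nonUnion _ (by rw [e1]; simp),
      UnionComps.nonUnion _ (by rw [e2]; simp), ?_, ?_⟩ <;>
    · intro X hX; rw [List.mem_singleton] at hX; subst hX
      exact ⟨_, List.mem_singleton.mpr rfl, h⟩
  · refine ⟨[B], [B'], UnionComps.nonUnion _ (by rw [e1]; simp),
      UnionComps.nonUnion _ (by rw [e2]; simp), ?_, ?_⟩ <;>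
    · intro X hX; rw [List.mem_singleton] at hX; subst hX
      exact ⟨_, List.mem_singleton.mpr rfl, h⟩
  · refine ⟨la, lb, hla, hlb, ?_, ?_⟩
    · intro X hX
      obtain ⟨i, hi⟩ := List.mem_iff_get.mp hX
      exact ⟨lb.get (f i), List.get_mem _ _, hi ▸ hf i⟩
    · intro Y hY
      obtain ⟨j, hj⟩ := List.mem_iff_get.mp hY
      exact ⟨la.get (g j), List.get_mem _ _, hj ▸ hg j⟩

lemma elem_to_fin {R : ITree → ITree → Prop} {L L' : List ITree}
    (h : ∀ X ∈ L, ∃ Y ∈ L', R X Y) :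
    ∃ f : Fin L.length → Fin L'.length, ∀ i, R (L.get i) (L'.get (f i)) := by
  have key : ∀ i : Fin L.length, ∃ j : Fin L'.length, R (L.get i) (L'.get j) := by
    intro i
    obtain ⟨Y, hY, hR⟩ := h (L.get i) (List.get_mem _ _)
    obtain ⟨j, hj⟩ := List.mem_iff_get.mp hY
    exact ⟨j, hj ▸ hR⟩
  choose f hf using key
  exact ⟨f, hf⟩

lemma elem_to_fin' {R : ITree → ITree → Prop} {L L' : List ITree}
    (h : ∀ Y ∈ L', ∃ X ∈ L, R X Y) :
    ∃ g : Fin L'.length → Fin L.length, ∀ j, R (L.get (g j)) (L'.get j) := by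
  have key : ∀ j : Fin L'.length, ∃ i : Fin L.length, R (L.get i) (L'.get j) := by
    intro j
    obtain ⟨X, hX, hR⟩ := h (L'.get j) (List.get_mem _ _)
    obtain ⟨i, hi⟩ := List.mem_iff_get.mp hX
    exact ⟨i, hi ▸ hR⟩
  choose g hg using key
  exact ⟨g, hg⟩

lemma len_le_bind {α β : Type*} (l : List α) (f : α → List β)
    (h : ∀ a ∈ l, 1 ≤ (f a).length) : l.length ≤ (l.flatMap f).length := by
  induction l with
  | nil => simp
  | cons a t ih =>
    rw [List.flatMap_cons, List.length_append, List.length_cons]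
    have h1 := h a (by simp)
    have h2 := ih (fun x hx => h x (by simp [hx]))
    omega

lemma uc_subst (V : ℕ) (B : ITree) {lb : List ITree} (hlb : UnionComps B lb) :
    ∀ {A : ITree} {la : List ITree}, UnionComps A la → A.Wf →
    UnionComps (substT V B A)
      (la.flatMap fun C => if C [] = some (Lab.atom (Atom.var V)) then lb
        else [substT V B C]) := by
  intro A la h
  induction h with
  | nonUnion A hA =>
    intro w
    by_cases hv : A [] = some (Lab.atom (Atom.var V))
    · rw [substT_eq w hv]
      simpa [hv] using hlb
    · have hr : substT V B A [] ≠ some Lab.union := by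
        rw [substT_root hv]; exact hA
      simpa [hv] using UnionComps.nonUnion _ hr
  | union A l r hA h2 h3 ihl ihr =>
    intro w
    have hv : A [] ≠ some (Lab.atom (Atom.var V)) := by rw [hA]; simp
    have wl := ITree.wf_child w hA trivial false
    have wr := ITree.wf_child w hA trivial true
    rw [List.flatMap_append]
    refine UnionComps.union _ _ _ ?_ ?_ ?_
    · rw [substT_root hv]; exact hA
    · rw [substT_child w hv]; exact ihl wl
    · rw [substT_child w hv]; exact ihr wr

def SubRel (V : ℕ) (B B' : ITree) (X Y : ITree) : Prop :=
  TreeEq X Y ∨ ∃ A A', A.Wf ∧ A'.Wf ∧ TreeEq A A' ∧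
    X = substT V B A ∧ Y = substT V B' A'

/-- tree substitution preserves coinductive equivalence:
A ≈_T A' and B ≈_T B' imply A[B/V] ≈_T A'[B'/V]. -/
theorem stmt9 (V : ℕ) (A A' B B' : ITree)
    (wA : A.Wf) (wA' : A'.Wf) (wB : B.Wf) (wB' : B'.Wf)
    (h1 : TreeEq A A') (h2 : TreeEq B B') :
    TreeEq (substT V B A) (substT V B' A') := by
  obtain ⟨lb, lb', hlbB, hlbB', hBl, hBr⟩ := treeEq_comps h2
  refine ⟨SubRel V B B', ?_, Or.inr ⟨A, A', wA, wA', h1, rfl, rfl⟩⟩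
  rintro X Y (hXY | ⟨A₀, A₀', w₀, w₀', hEq, rfl, rfl⟩)
  · exact EqF_mono (fun _ _ hh => Or.inl hh) _ _ (treeEq_dest hXY)
  rcases treeEq_dest hEq with ⟨a, ha1, ha2⟩ | ⟨hc1, hc2, hcl, hcr⟩ |
    ⟨hc1, hc2, hcl, hcr⟩ | ⟨la, la', hla, hla', hlen, ⟨f, hf⟩, ⟨g, hg⟩⟩
  · by_cases hv : a = Atom.var V
    · subst hv
      rw [substT_eq w₀ ha1, substT_eq w₀' ha2]
      exact EqF_mono (fun _ _ hh => Or.inl hh) _ _ (treeEq_dest h2)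
    · refine Or.inl ⟨a, ?_, ?_⟩
      · rw [substT_root (by rw [ha1]; simp [hv])]; exact ha1
      · rw [substT_root (by rw [ha2]; simp [hv])]; exact ha2
  · have hv : A₀ [] ≠ some (Lab.atom (Atom.var V)) := by rw [hc1]; simp
    have hv' : A₀' [] ≠ some (Lab.atom (Atom.var V)) := by rw [hc2]; simp
    refine Or.inr (Or.inl ⟨?_, ?_, ?_, ?_⟩)
    · rw [substT_root hv]; exact hc1
    · rw [substT_root hv']; exact hc2
    · rw [substT_child w₀ hv, substT_child w₀' hv']
      exact Or.inr ⟨_, _, ITree.wf_child w₀ hc1 trivial false,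
        ITree.wf_child w₀' hc2 trivial false, hcl, rfl, rfl⟩
    · rw [substT_child w₀ hv, substT_child w₀' hv']
      exact Or.inr ⟨_, _, ITree.wf_child w₀ hc1 trivial true,
        ITree.wf_child w₀' hc2 trivial true, hcr, rfl, rfl⟩
  · have hv : A₀ [] ≠ some (Lab.atom (Atom.var V)) := by rw [hc1]; simp
    have hv' : A₀' [] ≠ some (Lab.atom (Atom.var V)) := by rw [hc2]; simp
    refine Or.inr (Or.inr (Or.inl ⟨?_, ?_, ?_, ?_⟩))
    · rw [substT_root hv]; exact hc1
    · rw [substT_root hv']; exact hc2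
    · rw [substT_child w₀ hv, substT_child w₀' hv']
      exact Or.inr ⟨_, _, ITree.wf_child w₀ hc1 trivial false,
        ITree.wf_child w₀' hc2 trivial false, hcl, rfl, rfl⟩
    · rw [substT_child w₀ hv, substT_child w₀' hv']
      exact Or.inr ⟨_, _, ITree.wf_child w₀ hc1 trivial true,
        ITree.wf_child w₀' hc2 trivial true, hcr, rfl, rfl⟩
  · have wfls := uc_wf hla w₀
    have wfls' := uc_wf hla' w₀'
    have rts := uc_roots hla
    have rts' := uc_roots hla'
    have hfe : ∀ C ∈ la, ∃ C' ∈ la', TreeEq C C' := by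
      intro C hC
      obtain ⟨i, hi⟩ := List.mem_iff_get.mp hC
      exact ⟨la'.get (f i), List.get_mem _ _, hi ▸ hf i⟩
    have hge : ∀ C' ∈ la', ∃ C ∈ la, TreeEq C C' := by
      intro C' hC'
      obtain ⟨j, hj⟩ := List.mem_iff_get.mp hC'
      exact ⟨la.get (g j), List.get_mem _ _, hj ▸ hg j⟩
    have hL := uc_subst V B hlbB hla w₀
    have hL' := uc_subst V B' hlbB' hla' w₀'
    have hlen1 : la.length ≤ (la.flatMap fun C =>
        if C [] = some (Lab.atom (Atom.var V)) then lb
        else [substT V B C]).length := by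
      refine len_le_bind _ _ (fun C hC => ?_)
      by_cases hv : C [] = some (Lab.atom (Atom.var V))
      · simpa [hv] using uc_len hlbB
      · simp [hv]
    have hlen2 : la'.length ≤ (la'.flatMap fun C =>
        if C [] = some (Lab.atom (Atom.var V)) then lb'
        else [substT V B' C]).length := by
      refine len_le_bind _ _ (fun C hC => ?_)
      by_cases hv : C [] = some (Lab.atom (Atom.var V))
      · simpa [hv] using uc_len hlbB'
      · simp [hv]
    have fwd : ∀ X ∈ (la.flatMap fun C =>
        if C [] = some (Lab.atom (Atom.var V)) then lb else [substT V B C]),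
        ∃ Y ∈ (la'.flatMap fun C =>
        if C [] = some (Lab.atom (Atom.var V)) then lb' else [substT V B' C]),
        SubRel V B B' X Y := by
      intro X hX
      obtain ⟨C, hC, hXC⟩ := List.mem_flatMap.mp hX
      obtain ⟨C', hC', hCC'⟩ := hfe C hC
      have hroot := root_match hCC' (rts C hC) (rts' C' hC')
      by_cases hv : C [] = some (Lab.atom (Atom.var V))
      · have hv' : C' [] = some (Lab.atom (Atom.var V)) := by rw [hroot, hv]
        rw [if_pos hv] at hXC
        obtain ⟨Y, hY, hXY⟩ := hBl X hXC
        exact ⟨Y, List.mem_flatMap.mpr ⟨C', hC', by rw [if_pos hv']; exact hY⟩,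
          Or.inl hXY⟩
      · have hv' : C' [] ≠ some (Lab.atom (Atom.var V)) := by rw [hroot]; exact hv
        rw [if_neg hv, List.mem_singleton] at hXC
        subst hXC
        exact ⟨substT V B' C', List.mem_flatMap.mpr ⟨C', hC', by rw [if_neg hv']; simp⟩,
          Or.inr ⟨C, C', wfls C hC, wfls' C' hC', hCC', rfl, rfl⟩⟩
    have bwd : ∀ Y ∈ (la'.flatMap fun C =>
        if C [] = some (Lab.atom (Atom.var V)) then lb' else [substT V B' C]),
        ∃ X ∈ (la.flatMap fun C =>
        if C [] = some (Lab.atom (Atom.var V)) then lb else [substT V B C]),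
        SubRel V B B' X Y := by
      intro Y hY
      obtain ⟨C', hC', hYC'⟩ := List.mem_flatMap.mp hY
      obtain ⟨C, hC, hCC'⟩ := hge C' hC'
      have hroot := root_match hCC' (rts C hC) (rts' C' hC')
      by_cases hv' : C' [] = some (Lab.atom (Atom.var V))
      · have hv : C [] = some (Lab.atom (Atom.var V)) := by rw [← hroot, hv']
        rw [if_pos hv'] at hYC'
        obtain ⟨X, hX, hXY⟩ := hBr Y hYC'
        exact ⟨X, List.mem_flatMap.mpr ⟨C, hC, by rw [if_pos hv]; exact hX⟩,
          Or.inl hXY⟩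
      · have hv : C [] ≠ some (Lab.atom (Atom.var V)) := by rw [← hroot]; exact hv'
        rw [if_neg hv', List.mem_singleton] at hYC'
        subst hYC'
        exact ⟨substT V B C, List.mem_flatMap.mpr ⟨C, hC, by rw [if_neg hv]; simp⟩,
          Or.inr ⟨C, C', wfls C hC, wfls' C' hC', hCC', rfl, rfl⟩⟩
    have hfin : 2 < (la.flatMap fun C =>
        if C [] = some (Lab.atom (Atom.var V)) then lb
        else [substT V B C]).length + (la'.flatMap fun C =>
        if C [] = some (Lab.atom (Atom.var V)) then lb'
        else [substT V B' C]).length := lt_of_lt_of_le hlen (Nat.add_le_add hlen1 hlen2)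
    exact Or.inr (Or.inr (Or.inr ⟨_, _, hL, hL', hfin, elem_to_fin fwd, elem_to_fin' bwd⟩))


end CAP
end

section
/- Coinductive equivalence implies coinductive subtyping on infinite types: if A ≈_T B then A ≤_T B. -/
namespace CAP

theorem treeEq_symm {A B : ITree} (h : TreeEq A B) : TreeEq B A := by
  obtain ⟨R, hpost, hAB⟩ := h
  refine ⟨fun X Y => R Y X, ?_, hAB⟩
  intro X Y hXY
  rcases hpost Y X hXY with ⟨a, h1, h2⟩ | ⟨h1, h2, h3, h4⟩ | ⟨h1, h2, h3, h4⟩ |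
    ⟨la, lb, hla, hlb, hlen, ⟨f, hf⟩, ⟨g, hg⟩⟩
  · exact Or.inl ⟨a, h2, h1⟩
  · exact Or.inr (Or.inl ⟨h2, h1, h3, h4⟩)
  · exact Or.inr (Or.inr (Or.inl ⟨h2, h1, h3, h4⟩))
  · refine Or.inr (Or.inr (Or.inr ⟨lb, la, hlb, hla, by omega, ⟨g, hg⟩, ⟨f, hf⟩⟩))

theorem treeEq_of_rel {R : ITree → ITree → Prop}
    (hpost : ∀ X Y, R X Y → EqF R X Y) {A B : ITree} (h : R A B) : TreeEq A B :=
  ⟨R, hpost, h⟩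

/-- coinductive equivalence implies coinductive subtyping. -/
theorem stmt12 (A B : ITree) (hA : A.Wf) (hB : B.Wf) (h : TreeEq A B) :
    TreeLe A B := by
  refine ⟨TreeEq, ?_, h⟩
  intro X Y hXY
  obtain ⟨R, hpost, hXY⟩ := hXY
  rcases hpost X Y hXY with ⟨a, h1, h2⟩ | ⟨h1, h2, h3, h4⟩ | ⟨h1, h2, h3, h4⟩ |
    ⟨la, lb, hla, hlb, hlen, ⟨f, hf⟩, _⟩
  · exact Or.inl ⟨a, h1, h2⟩
  · exact Or.inr (Or.inl ⟨h1, h2, treeEq_of_rel hpost h3, treeEq_of_rel hpost h4⟩)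
  · exact Or.inr (Or.inr (Or.inl ⟨h1, h2,
      treeEq_symm (treeEq_of_rel hpost h3), treeEq_of_rel hpost h4⟩))
  · exact Or.inr (Or.inr (Or.inr ⟨la, lb, hla, hlb, hlen,
      ⟨f, fun i => treeEq_of_rel hpost (hf i)⟩⟩))

end CAP
end
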